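/- Let P be a convex body and for t ≥ 0 define the truncation P_t = P ∩ {x : x·u₀ ≤ h_P(u₀) − t} for a fixed unit vector u₀. If F(P, u₀) is not a facet of the polytope P (the support set in direction u₀ has dimension ≤ n−2), then for all sufficiently small t > 0, h_{P_t}(u_i) = h_P(u_i) for every facet normal u_i ≠ u₀ of P, while h_{P_t}(u₀) = h_P(u₀) − t. -/

import Mathlib

open MeasureTheory

/-- Support function of a set. -/
noncomputable def suppFn {n : ℕ} (P : Set (EuclideanSpace ℝ (Fin n)))
    (v : EuclideanSpace ℝ (Fin n)) : ℝ :=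
  sSup ((fun x => (inner ℝ x v : ℝ)) '' P)

lemma suppFn_bdd {n : ℕ} {P : Set (EuclideanSpace ℝ (Fin n))} (hP : IsCompact P)
    (v : EuclideanSpace ℝ (Fin n)) : BddAbove ((fun x => (inner ℝ x v : ℝ)) '' P) :=
  (hP.image (continuous_id.inner continuous_const)).bddAbove

lemma le_suppFn {n : ℕ} {P : Set (EuclideanSpace ℝ (Fin n))} (hP : IsCompact P)
    (v : EuclideanSpace ℝ (Fin n)) {x : EuclideanSpace ℝ (Fin n)} (hx : x ∈ P) :
    (inner ℝ x v : ℝ) ≤ suppFn P v :=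
  le_csSup (suppFn_bdd hP v) (Set.mem_image_of_mem _ hx)

lemma exists_suppFn_eq {n : ℕ} {P : Set (EuclideanSpace ℝ (Fin n))} (hP : IsCompact P)
    (hne : P.Nonempty) (v : EuclideanSpace ℝ (Fin n)) :
    ∃ x ∈ P, (inner ℝ x v : ℝ) = suppFn P v := by
  obtain ⟨x, hxP, hmax⟩ := hP.exists_isMaxOn (f := fun x => (inner ℝ x v : ℝ)) hne
    ((continuous_id.inner continuous_const).continuousOn)
  refine ⟨x, hxP, le_antisymm (le_suppFn hP v hxP) ?_⟩
  exact csSup_le (hne.image _) (by rintro _ ⟨w, hw, rfl⟩; exact hmax hw)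

theorem truncation_support_function
    (n N : ℕ) (hn : 0 < n)
    (u : Fin N → EuclideanSpace ℝ (Fin n)) (hunit : ∀ i, ‖u i‖ = 1)
    (a : Fin N → ℝ)
    (P : Set (EuclideanSpace ℝ (Fin n)))
    (hP : P = ⋂ i : Fin N, {x | (inner ℝ x (u i) : ℝ) ≤ a i})
    (hPcpt : IsCompact P) (hPint : (interior P).Nonempty)
    -- the u i are facet normals of P
    (hfacets : ∀ i, 0 < μH[(n : ℝ) - 1]
      (P ∩ {x | (inner ℝ x (u i) : ℝ) = suppFn P (u i)}))
    (u₀ : EuclideanSpace ℝ (Fin n)) (hu₀ : ‖u₀‖ = 1)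
    -- the support set F(P, u₀) is not a facet
    (hnotfacet : μH[(n : ℝ) - 1]
      (P ∩ {x | (inner ℝ x u₀ : ℝ) = suppFn P u₀}) = 0) :
    ∃ ε > 0, ∀ t ∈ Set.Ioo (0 : ℝ) ε,
      (∀ i, u i ≠ u₀ →
        suppFn (P ∩ {x | (inner ℝ x u₀ : ℝ) ≤ suppFn P u₀ - t}) (u i) = suppFn P (u i)) ∧
      suppFn (P ∩ {x | (inner ℝ x u₀ : ℝ) ≤ suppFn P u₀ - t}) u₀ = suppFn P u₀ - t := by
  classical
  set h : ℝ := suppFn P u₀ with hh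
  have hPne : P.Nonempty := hPint.mono interior_subset
  -- convexity of P
  have hconv : Convex ℝ P := by
    rw [hP]
    refine convex_iInter fun i => convex_halfSpace_le ?_ _
    exact ⟨fun x y => inner_add_left _ _ _, fun c x => real_inner_smul_left _ _ _⟩
  -- interior point and a point y with ⟪y, u₀⟫ < h
  obtain ⟨x₀, hx₀⟩ := hPint
  obtain ⟨δ, hδ, hball⟩ := Metric.isOpen_iff.1 isOpen_interior x₀ hx₀
  set y : EuclideanSpace ℝ (Fin n) := x₀ - (δ/2) • u₀ with hy
  have hyP : y ∈ P := by
    apply interior_subset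
    apply hball
    simp only [Metric.mem_ball, hy, dist_eq_norm, sub_sub_cancel_left, norm_neg, norm_smul,
      hu₀, Real.norm_eq_abs, abs_of_pos (by linarith : (0:ℝ) < δ/2), mul_one]
    linarith
  have hyval : (inner ℝ y u₀ : ℝ) = (inner ℝ x₀ u₀ : ℝ) - δ/2 := by
    rw [hy]
    rw [inner_sub_left, real_inner_smul_left, real_inner_self_eq_norm_sq, hu₀]
    ring
  have hylt : (inner ℝ y u₀ : ℝ) < h := by
    have := le_suppFn hPcpt u₀ (interior_subset hx₀)
    rw [hyval]; linarith
  -- max point for u₀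
  obtain ⟨xm, hxmP, hxmval⟩ := exists_suppFn_eq hPcpt hPne u₀
  -- for each i, a maximizer of ⟪·, u i⟫ with ⟪·, u₀⟫ < h
  have hpick : ∀ i : Fin N, ∃ x ∈ P,
      (inner ℝ x (u i) : ℝ) = suppFn P (u i) ∧ (inner ℝ x u₀ : ℝ) < h := by
    intro i
    by_contra hcon
    push_neg at hcon
    have hsub : (P ∩ {x | (inner ℝ x (u i) : ℝ) = suppFn P (u i)}) ⊆
        (P ∩ {x | (inner ℝ x u₀ : ℝ) = h}) := by
      rintro x ⟨hxP, hxe⟩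
      refine ⟨hxP, le_antisymm (le_suppFn hPcpt u₀ hxP) ?_⟩
      exact hcon x hxP hxe
    exact absurd (le_trans (measure_mono hsub) hnotfacet.le) (hfacets i).not_ge
  choose x hxP hxval hxlt using hpick
  -- the threshold
  set s : Finset ℝ :=
    insert (h - (inner ℝ y u₀ : ℝ)) (Finset.univ.image fun i => h - (inner ℝ (x i) u₀ : ℝ)) with hs
  have hsne : s.Nonempty := ⟨_, Finset.mem_insert_self _ _⟩
  refine ⟨s.min' hsne, ?_, ?_⟩
  · rw [gt_iff_lt, Finset.lt_min'_iff]
    intro b hb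
    rw [hs, Finset.mem_insert] at hb
    rcases hb with rfl | hb
    · linarith
    · obtain ⟨i, _, rfl⟩ := Finset.mem_image.1 hb
      have := hxlt i
      linarith
  · rintro t ⟨ht0, htε⟩
    have htyc : t < h - (inner ℝ y u₀ : ℝ) :=
      lt_of_lt_of_le htε (Finset.min'_le _ _ (Finset.mem_insert_self _ _))
    have hti : ∀ i, t < h - (inner ℝ (x i) u₀ : ℝ) := fun i =>
      lt_of_lt_of_le htε (Finset.min'_le _ _
        (Finset.mem_insert_of_mem (Finset.mem_image_of_mem _ (Finset.mem_univ i))))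
    set Pt : Set (EuclideanSpace ℝ (Fin n)) :=
      P ∩ {x | (inner ℝ x u₀ : ℝ) ≤ h - t} with hPt
    have hPtsub : Pt ⊆ P := Set.inter_subset_left
    have hPtcpt : IsCompact Pt :=
      hPcpt.inter_right (isClosed_le (continuous_id.inner continuous_const) continuous_const)
    -- the witness point z on the segment from xm to y
    have hc : (0:ℝ) < h - (inner ℝ y u₀ : ℝ) := by linarith
    set σ : ℝ := t / (h - (inner ℝ y u₀ : ℝ)) with hσ
    have hσ0 : 0 < σ := div_pos ht0 hc
    have hσ1 : σ < 1 := (div_lt_one hc).2 htyc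
    set z : EuclideanSpace ℝ (Fin n) := (1 - σ) • xm + σ • y with hz
    have hzP : z ∈ P := hconv hxmP hyP (by linarith) (le_of_lt hσ0) (by ring)
    have hzval : (inner ℝ z u₀ : ℝ) = h - t := by
      rw [hz, inner_add_left, real_inner_smul_left, real_inner_smul_left, hxmval]
      have : σ * (h - (inner ℝ y u₀ : ℝ)) = t := div_mul_cancel₀ t (ne_of_gt hc)
      nlinarith [this]
    have hzPt : z ∈ Pt := ⟨hzP, le_of_eq hzval⟩
    have hPtne : Pt.Nonempty := ⟨z, hzPt⟩
    constructor
    · intro i _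
      refine le_antisymm ?_ ?_
      · exact csSup_le (hPtne.image _)
          (by rintro _ ⟨w, hw, rfl⟩; exact le_suppFn hPcpt (u i) (hPtsub hw))
      · have hxiPt : x i ∈ Pt := ⟨hxP i, by have := hti i; simp only [Set.mem_setOf_eq]; linarith⟩
        calc suppFn P (u i) = (inner ℝ (x i) (u i) : ℝ) := (hxval i).symm
          _ ≤ suppFn Pt (u i) := le_suppFn hPtcpt (u i) hxiPt
    · refine le_antisymm ?_ ?_
      · exact csSup_le (hPtne.image _) (by rintro _ ⟨w, hw, rfl⟩; exact hw.2)
      · calc h - t = (inner ℝ z u₀ : ℝ) := hzval.symm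
          _ ≤ suppFn Pt u₀ := le_suppFn hPtcpt u₀ hzPt
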